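/- Let c > 0, T ∈ (0, ∞], and let A, B : [0,T) → ℝ be differentiable functions with A(0) > 0, B(0) < 0, and suppose that for all t ∈ [0,T): A'(t) ≥ −c·A(t)·B(t) and B'(t) ≤ c·A(t)·B(t). Then for all t ∈ [0,T): A(t) ≥ A(0) > 0 and B(t) ≤ B(0) < 0. -/
import Mathlib

open scoped ENNReal
open Set Filter Topology

private lemma eventually_gt_of_deriv_pos' {f : ℝ → ℝ} {x f' : ℝ}
    (hf : HasDerivAt f f' x) (hpos : 0 < f') : ∀ᶠ z in 𝓝[>] x, f x < f z := by
  have h := hasDerivAt_iff_tendsto_slope.1 hf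
  have h2 : ∀ᶠ z in 𝓝[≠] x, 0 < slope f x z :=
    h (Ioi_mem_nhds hpos)
  have h3 : ∀ᶠ z in 𝓝[>] x, 0 < slope f x z :=
    h2.filter_mono (nhdsWithin_mono x fun z hz => ne_of_gt hz)
  refine h3.mp ?_
  filter_upwards [self_mem_nhdsWithin] with z hz hslope
  have hzx : 0 < z - x := sub_pos.2 hz
  have := mul_pos hslope hzx
  rw [slope_def_field] at hslope
  nlinarith [div_mul_cancel₀ (f z - f x) (ne_of_gt hzx)]

theorem ode_sign_persistence (c : ℝ) (hc : 0 < c) (T : ℝ≥0∞) (hT : 0 < T)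
    (A B : ℝ → ℝ)
    (hA : ∀ t : ℝ, 0 ≤ t → ENNReal.ofReal t < T → DifferentiableAt ℝ A t)
    (hB : ∀ t : ℝ, 0 ≤ t → ENNReal.ofReal t < T → DifferentiableAt ℝ B t)
    (hA0 : 0 < A 0) (hB0 : B 0 < 0)
    (hA' : ∀ t : ℝ, 0 ≤ t → ENNReal.ofReal t < T → -c * A t * B t ≤ deriv A t)
    (hB' : ∀ t : ℝ, 0 ≤ t → ENNReal.ofReal t < T → deriv B t ≤ c * A t * B t) :
    ∀ t : ℝ, 0 ≤ t → ENNReal.ofReal t < T → A 0 ≤ A t ∧ B t ≤ B 0 := by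
  intro t0 ht0 hT0
  -- every point of `Icc 0 t0` is in the domain
  have hdom : ∀ x ∈ Icc (0:ℝ) t0, 0 ≤ x ∧ ENNReal.ofReal x < T := by
    intro x hx
    exact ⟨hx.1, lt_of_le_of_lt (ENNReal.ofReal_le_ofReal hx.2) hT0⟩
  set s : Set ℝ := {x | A 0 ≤ A x ∧ B x ≤ B 0} with hs
  have hsub : Icc (0:ℝ) t0 ⊆ s := by
    apply IsClosed.Icc_subset_of_forall_exists_gt
    · -- closedness
      have hAc : ContinuousOn A (Icc (0:ℝ) t0) := fun x hx =>
        ((hA x (hdom x hx).1 (hdom x hx).2).continuousAt).continuousWithinAt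
      have hBc : ContinuousOn B (Icc (0:ℝ) t0) := fun x hx =>
        ((hB x (hdom x hx).1 (hdom x hx).2).continuousAt).continuousWithinAt
      have : s ∩ Icc (0:ℝ) t0 =
          (Icc (0:ℝ) t0 ∩ A ⁻¹' Ici (A 0)) ∩ (Icc (0:ℝ) t0 ∩ B ⁻¹' Iic (B 0)) := by
        ext x; simp [hs, mem_preimage, and_comm, and_assoc, and_left_comm]
      rw [this]
      exact (hAc.preimage_isClosed_of_isClosed isClosed_Icc isClosed_Ici).inter
        (hBc.preimage_isClosed_of_isClosed isClosed_Icc isClosed_Iic)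
    · exact ⟨le_refl (A 0), le_refl (B 0)⟩
    · intro x hx y hy
      obtain ⟨⟨hAx, hBx⟩, hxI⟩ := hx
      have hxd := hdom x ⟨hxI.1, le_of_lt hxI.2⟩
      have hApos : 0 < A x := lt_of_lt_of_le hA0 hAx
      have hBneg : B x < 0 := lt_of_le_of_lt hBx hB0
      have hdA : 0 < deriv A x := by
        have := hA' x hxd.1 hxd.2
        nlinarith [mul_pos (mul_pos hc hApos) (neg_pos.2 hBneg)]
      have hdB : deriv B x < 0 := by
        have := hB' x hxd.1 hxd.2
        nlinarith [mul_pos (mul_pos hc hApos) (neg_pos.2 hBneg)]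
      have hAx' : HasDerivAt A (deriv A x) x := (hA x hxd.1 hxd.2).hasDerivAt
      have hBx' : HasDerivAt (fun z => -B z) (-(deriv B x)) x :=
        ((hB x hxd.1 hxd.2).hasDerivAt).neg
      have e1 := eventually_gt_of_deriv_pos' hAx' hdA
      have e2 := eventually_gt_of_deriv_pos' hBx' (by linarith)
      have e3 : Ioc x y ∈ 𝓝[>] x := Ioc_mem_nhdsGT_of_mem ⟨le_refl x, hy⟩
      obtain ⟨z, hz1, hz2, hz3⟩ := (e1.and (e2.and (eventually_of_mem e3 fun _ h => h))).exists
      refine ⟨z, ⟨le_of_lt (lt_of_le_of_lt hAx hz1), ?_⟩, hz3⟩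
      have : B z < B x := by simpa using neg_lt_neg hz2
      linarith
  exact hsub ⟨ht0, le_refl t0⟩
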